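/- Let p be an odd prime with p ≡ 2 (mod 3) and p ≡ ±2 (mod 5), and let n = 4p. Then F_n is odd and F_n divides F_{F_n + 2} - 1. -/

import Mathlib

open Nat Polynomial


private lemma cassini (n : ℕ) :
    (Nat.fib (n+2) : ℤ) * Nat.fib n - (Nat.fib (n+1) : ℤ)^2 = (-1)^(n+1) := by
  induction n with
  | zero => simp
  | succ k ih =>
    have e2 : (Nat.fib (k+2) : ℤ) = Nat.fib k + Nat.fib (k+1) := by
      exact_mod_cast congrArg (Nat.cast (R := ℤ)) (Nat.fib_add_two (n := k))
    have e3 : (Nat.fib (k+3) : ℤ) = Nat.fib (k+1) + Nat.fib (k+2) := by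
      exact_mod_cast congrArg (Nat.cast (R := ℤ)) (Nat.fib_add_two (n := k+1))
    have hpow : ((-1 : ℤ))^(k+2) = -(-1)^(k+1) := by ring
    show (Nat.fib (k+3) : ℤ) * Nat.fib (k+1) - (Nat.fib (k+2) : ℤ)^2 = (-1)^(k+2)
    rw [hpow]
    linear_combination (-1 : ℤ) * ih + (Nat.fib (k+1) : ℤ) * e3 - (Nat.fib (k+2) : ℤ) * e2


private lemma binet {R : Type*} [CommRing R] (α : R) (h : α^2 = 5) (k : ℕ) :
    (1+α)^k = (1-α)^k + 2^k * (Nat.fib k : R) * α := by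
  induction k using Nat.twoStepInduction with
  | zero => simp
  | one => simp; ring
  | more k ih1 ih2 =>
    have hu : (1+α)^(k+2) = 2*(1+α)^(k+1) + 4*(1+α)^k := by
      have h2 : (1+α)^2 = 2*(1+α) + 4 := by linear_combination h
      calc (1+α)^(k+2) = (1+α)^k * (1+α)^2 := by ring
        _ = (1+α)^k * (2*(1+α)+4) := by rw [h2]
        _ = 2*(1+α)^(k+1) + 4*(1+α)^k := by ring
    have hv : (1-α)^(k+2) = 2*(1-α)^(k+1) + 4*(1-α)^k := by
      have h2 : (1-α)^2 = 2*(1-α) + 4 := by linear_combination h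
      calc (1-α)^(k+2) = (1-α)^k * (1-α)^2 := by ring
        _ = (1-α)^k * (2*(1-α)+4) := by rw [h2]
        _ = 2*(1-α)^(k+1) + 4*(1-α)^k := by ring
    have hf : (Nat.fib (k+2) : R) = Nat.fib k + Nat.fib (k+1) := by
      exact_mod_cast congrArg (Nat.cast (R := R)) (Nat.fib_add_two (n := k))
    rw [hu, hv, ih1, ih2, hf]
    ring
private lemma fib_card_add_one (p : ℕ) [Fact p.Prime] (hodd : p % 2 = 1)
    (hns : ¬ IsSquare (5 : ZMod p)) : (Nat.fib (p+1) : ZMod p) = 0 := by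
  have h5ne : (5 : ZMod p) ≠ 0 := fun h => hns (h ▸ ⟨0, by simp⟩)
  have hirr : Irreducible (X^2 - C (5 : ZMod p)) :=
    X_pow_sub_C_irreducible_of_prime Nat.prime_two
      (fun b hb => hns ⟨b, by rw [← hb]; ring⟩)
  haveI := Fact.mk hirr
  set f : (ZMod p)[X] := X^2 - C (5 : ZMod p) with hf
  let L := AdjoinRoot f
  have hinj : Function.Injective (algebraMap (ZMod p) L) := RingHom.injective _
  haveI : CharP L p := charP_of_injective_algebraMap hinj p
  set α : L := AdjoinRoot.root f with hα
  have hα2 : α^2 = 5 := by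
    have h := AdjoinRoot.mk_self (f := f)
    rw [hf, map_sub, map_pow, AdjoinRoot.mk_X, AdjoinRoot.mk_C, sub_eq_zero] at h
    rw [← hα] at h
    rw [h]
    exact map_ofNat _ 5
  have h5L : (5 : L) ≠ 0 := by
    intro h
    have h' : algebraMap (ZMod p) L 5 = algebraMap (ZMod p) L 0 := by
      rw [map_ofNat, map_zero]; exact h
    exact h5ne (hinj h')
  have hK : (5 : ZMod p)^(p/2) = -1 := by
    rcases ZMod.pow_div_two_eq_neg_one_or_one p h5ne with h | h
    · exact absurd ((ZMod.euler_criterion p h5ne).mpr h) hns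
    · exact h
  have hL5 : (5 : L)^(p/2) = -1 := by
    have := congrArg (algebraMap (ZMod p) L) hK
    rw [map_pow, map_neg, map_one, map_ofNat] at this
    exact this
  have hαp : α^p = -α := by
    calc α^p = α^(2*(p/2)+1) := by rw [show 2*(p/2)+1 = p by omega]
      _ = (α^2)^(p/2) * α := by rw [pow_succ, pow_mul]
      _ = (5 : L)^(p/2) * α := by rw [hα2]
      _ = -α := by rw [hL5]; ring
  have hu : (1+α)^p = 1-α := by
    rw [add_pow_char (x := (1:L)) (y := α) (p := p), one_pow, hαp]; ring
  have hv : (1-α)^p = 1+α := by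
    have h1 : (1-α) = 1 + (-α) := by ring
    have h2 : (-α)^p = -α^p := Odd.neg_pow (Nat.odd_iff.mpr hodd) α
    rw [h1, add_pow_char (x := (1:L)) (y := -α) (p := p), one_pow, h2, hαp]; ring
  have hb := binet α hα2 (p+1)
  have e1 : (1+α)^(p+1) = (1-α)*(1+α) := by rw [pow_succ, hu]
  have e2 : (1-α)^(p+1) = (1+α)*(1-α) := by rw [pow_succ, hv]
  have h0 : (2 : L)^(p+1) * (Nat.fib (p+1) : L) * α = 0 := by
    linear_combination e1 - e2 - hb
  have h2ne : (2 : L) ≠ 0 := by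
    intro h
    have h2' : algebraMap (ZMod p) L ((2:ℕ) : ZMod p) = algebraMap (ZMod p) L 0 := by
      rw [map_natCast, map_zero]; exact_mod_cast h
    have hdvd := (ZMod.natCast_eq_zero_iff 2 p).mp (hinj h2')
    have := (Nat.prime_dvd_prime_iff_eq Fact.out Nat.prime_two).mp hdvd
    omega
  have hαne : α ≠ 0 := by
    intro h
    rw [h] at hα2
    exact h5L (by simpa using hα2.symm)
  have hfib : (Nat.fib (p+1) : L) = 0 := by
    rcases mul_eq_zero.mp h0 with h | h
    · rcases mul_eq_zero.mp h with h | h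
      · exact absurd h (pow_ne_zero _ h2ne)
      · exact h
    · exact absurd h hαne
  have hfin : algebraMap (ZMod p) L ((Nat.fib (p+1) : ZMod p)) = algebraMap (ZMod p) L 0 := by
    rw [map_natCast, map_zero]; exact hfib
  exact hinj hfin
private lemma d2' : ¬ IsSquare (((2:ℕ)) : ZMod 5) := by decide
private lemma d3' : ¬ IsSquare (((3:ℕ)) : ZMod 5) := by decide

private lemma five_nonsquare (p : ℕ) [Fact p.Prime] (hodd : p % 2 = 1)
    (h5 : p % 5 = 2 ∨ p % 5 = 3) : ¬ IsSquare (5 : ZMod p) := by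
  haveI : Fact (Nat.Prime 5) := ⟨by norm_num⟩
  intro hsq
  have hne2 : p ≠ 2 := by omega
  have hiff := ZMod.exists_sq_eq_prime_iff_of_mod_four_eq_one (p := 5) (q := p)
    (by norm_num) hne2
  have h1 : IsSquare ((p : ℕ) : ZMod 5) := hiff.mpr (by exact_mod_cast hsq)
  rw [show ((p : ℕ) : ZMod 5) = ((p % 5 : ℕ) : ZMod 5) from (ZMod.natCast_mod p 5).symm] at h1
  rcases h5 with h | h <;> rw [h] at h1
  · exact d2' h1
  · exact d3' h1

private lemma fib_mod8_period : ∀ k, Nat.fib (k+12) % 8 = Nat.fib k % 8 ∧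
    Nat.fib (k+13) % 8 = Nat.fib (k+1) % 8 := by
  intro k
  induction k with
  | zero => constructor <;> decide
  | succ k ih =>
    obtain ⟨h1, h2⟩ := ih
    refine ⟨h2, ?_⟩
    show Nat.fib (k+14) % 8 = Nat.fib (k+2) % 8
    have e1 : Nat.fib (k+14) = Nat.fib (k+12) + Nat.fib (k+13) := Nat.fib_add_two
    have e2 : Nat.fib (k+2) = Nat.fib k + Nat.fib (k+1) := Nat.fib_add_two
    omega

private lemma fib_mod8 (m : ℕ) : Nat.fib (12*m + 8) % 8 = 5 := by
  induction m with
  | zero => decide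
  | succ m ih =>
    have := (fib_mod8_period (12*m+8)).1
    rw [show 12*(m+1)+8 = (12*m+8)+12 by ring]
    omega
private lemma fib_4p_dvd (t : ℕ) [Fact (Nat.Prime (t+5))] (hodd : (t+5) % 2 = 1)
    (h5 : (t+5) % 5 = 2 ∨ (t+5) % 5 = 3) : (t+5) ∣ Nat.fib (4*t+20) + 3 := by
  set p := t + 5 with hpdef
  set K := ZMod p with hK
  have h0 : (Nat.fib (t+6) : K) = 0 := fib_card_add_one p hodd (five_nonsquare p hodd h5)
  -- basic recurrences
  have r1 : (Nat.fib (t+6) : K) = Nat.fib (t+4) + Nat.fib (t+5) := by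
    exact_mod_cast congrArg (Nat.cast (R := K)) (Nat.fib_add_two (n := t+4))
  have r2 : (Nat.fib (t+5) : K) = Nat.fib (t+3) + Nat.fib (t+4) := by
    exact_mod_cast congrArg (Nat.cast (R := K)) (Nat.fib_add_two (n := t+3))
  have r3 : (Nat.fib (t+4) : K) = Nat.fib (t+2) + Nat.fib (t+3) := by
    exact_mod_cast congrArg (Nat.cast (R := K)) (Nat.fib_add_two (n := t+2))
  -- s^2 = 1 from Cassini
  have hodd' : Odd (t+5) := Nat.odd_iff.mpr hodd
  have hcas := cassini (t+4)
  rw [show t+4+2 = t+6 from rfl, show t+4+1 = t+5 from rfl] at hcas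
  have hs2 : (Nat.fib (t+5) : K)^2 = 1 := by
    have hx := congrArg (Int.cast (R := K)) hcas
    push_cast at hx
    rw [h0, Odd.neg_one_pow hodd'] at hx
    linear_combination -hx
  -- shift identities
  have sh : ∀ m : ℕ, (Nat.fib (m + t + 6) : K)
      = Nat.fib m * Nat.fib (t+5) + Nat.fib (m+1) * Nat.fib (t+6) := by
    intro m
    have h := Nat.fib_add m (t+5)
    rw [show m + (t+5) + 1 = m + t + 6 by omega, show (t+5)+1 = t+6 from rfl] at h
    rw [h, Nat.cast_add, Nat.cast_mul, Nat.cast_mul]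
  have c1 := sh (3*t+14)
  have c2 := sh (2*t+8)
  have c3 := sh (t+2)
  rw [show 3*t+14 + t + 6 = 4*t+20 by ring] at c1
  rw [show 2*t+8 + t + 6 = 3*t+14 by ring] at c2
  rw [show t+2 + t + 6 = 2*t+8 by ring] at c3
  -- fib(t+2) = -3 s
  have ha4 : (Nat.fib (t+4) : K) = -(Nat.fib (t+5) : K) := by linear_combination h0 - r1
  have ha3 : (Nat.fib (t+3) : K) = 2*(Nat.fib (t+5) : K) := by linear_combination -r2 - ha4
  have ha2 : (Nat.fib (t+2) : K) = -3*(Nat.fib (t+5) : K) := by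
    linear_combination -r3 + ha4 - ha3
  have hmain : (Nat.fib (4*t+20) : K) = -3 * (Nat.fib (t+5) : K)^4 := by
    rw [c1, h0, c2, h0, c3, h0, ha2]; ring
  have hfin : ((Nat.fib (4*t+20) + 3 : ℕ) : K) = 0 := by
    push_cast
    rw [hmain, show ((Nat.fib (t+5) : K))^4 = ((Nat.fib (t+5) : K)^2)^2 by ring, hs2]
    ring
  exact (ZMod.natCast_eq_zero_iff _ _).mp hfin

private lemma fib_mod_step (n : ℕ) : ∀ r, Nat.fib (r + n) ≡ Nat.fib r * Nat.fib (n+1) [MOD Nat.fib n]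
  | 0 => by simpa using Nat.modEq_zero_iff_dvd.mpr dvd_rfl
  | (m+1) => by
      rw [show m + 1 + n = m + n + 1 by omega, Nat.fib_add m n]
      have h : Nat.fib m * Nat.fib n ≡ 0 [MOD Nat.fib n] :=
        Nat.modEq_zero_iff_dvd.mpr (dvd_mul_left _ _)
      simpa using h.add_right (Nat.fib (m+1) * Nat.fib (n+1))

private lemma fib_mod_pow (n : ℕ) (q : ℕ) :
    ∀ r, Nat.fib (r + n*q) ≡ Nat.fib r * Nat.fib (n+1)^q [MOD Nat.fib n] := by
  induction q with
  | zero => intro r; simpa using Nat.ModEq.refl _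
  | succ q ih =>
    intro r
    rw [show r + n*(q+1) = (r + n*q) + n by ring]
    calc Nat.fib ((r+n*q)+n) ≡ Nat.fib (r+n*q) * Nat.fib (n+1) [MOD Nat.fib n] :=
          fib_mod_step n _
      _ ≡ (Nat.fib r * Nat.fib (n+1)^q) * Nat.fib (n+1) [MOD Nat.fib n] := (ih r).mul_right _
      _ = Nat.fib r * Nat.fib (n+1)^(q+1) := by ring

theorem stmt_13 (p : ℕ) (hp : p.Prime) (hodd : Odd p)
    (h3 : p % 3 = 2) (h5 : p % 5 = 2 ∨ p % 5 = 3) (n : ℕ) (hn : n = 4 * p) :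
    Odd (Nat.fib n) ∧ Nat.fib n ∣ Nat.fib (Nat.fib n + 2) - 1 := by
  have hp2 : p % 2 = 1 := Nat.odd_iff.mp hodd
  obtain ⟨t, rfl⟩ : ∃ t, p = t + 5 := ⟨p - 5, by omega⟩
  subst hn
  haveI : Fact (Nat.Prime (t+5)) := ⟨hp⟩
  rw [show 4*(t+5) = 4*t+20 by ring]
  set N := Nat.fib (4*t+20) with hN
  have hdvdp : (t+5) ∣ N + 3 := fib_4p_dvd t hp2 h5
  have hmod8 : N % 8 = 5 := by
    obtain ⟨k, hk⟩ : ∃ k, t = 6*k := ⟨t/6, by omega⟩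
    rw [hN, hk, show 4*(6*k)+20 = 12*(2*k+1)+8 by ring]
    exact fib_mod8 (2*k+1)
  have hOdd : Odd N := Nat.odd_iff.mpr (by omega)
  refine ⟨hOdd, ?_⟩
  -- 8p | N + 3
  have h8 : 8 ∣ N + 3 := by omega
  have hco : Nat.Coprime 8 (t+5) := Nat.Coprime.pow_left 3
    ((Nat.prime_two.coprime_iff_not_dvd).mpr (by omega))
  have hdvd : 8*(t+5) ∣ N + 3 := hco.mul_dvd_of_dvd_of_dvd h8 hdvdp
  obtain ⟨m, hm⟩ := hdvd
  obtain ⟨j, rfl⟩ : ∃ j, m = j + 1 := by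
    refine ⟨m - 1, ?_⟩
    rcases Nat.eq_zero_or_pos m with h | h
    · rw [h] at hm; omega
    · omega
  have hidx : N + 2 = (4*t+19) + (4*t+20)*(2*j+1) := by
    have expand : 8*(t+5)*(j+1) = (4*t+19) + (4*t+20)*(2*j+1) + 1 := by ring
    omega
  -- Cassini in nat form at 4t+18
  have hc := cassini (4*t+18)
  rw [show 4*t+18+2 = 4*t+20 from rfl, show 4*t+18+1 = 4*t+19 from rfl,
    show ((-1:ℤ))^(4*t+18+1) = -1 from Odd.neg_one_pow ⟨2*t+9, by ring⟩] at hc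
  have e19 : Nat.fib (4*t+19)^2 = Nat.fib (4*t+20) * Nat.fib (4*t+18) + 1 := by
    have : (Nat.fib (4*t+19)^2 : ℤ) = (Nat.fib (4*t+20) * Nat.fib (4*t+18) + 1 : ℤ) := by
      linear_combination -hc
    exact_mod_cast this
  have e21 : Nat.fib (4*t+21) = Nat.fib (4*t+19) + Nat.fib (4*t+20) :=
    Nat.fib_add_two (n := 4*t+19)
  -- fib(4t+21)^2 ≡ 1 [MOD N]
  have hsq : Nat.fib (4*t+21)^2 ≡ 1 [MOD N] := by
    have heq : Nat.fib (4*t+21)^2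
        = 1 + N * (Nat.fib (4*t+18) + 2*Nat.fib (4*t+19) + Nat.fib (4*t+20)) := by
      rw [e21, hN]
      have : (Nat.fib (4*t+19) + Nat.fib (4*t+20))^2
          = Nat.fib (4*t+19)^2 + Nat.fib (4*t+20) * (2*Nat.fib (4*t+19) + Nat.fib (4*t+20)) := by
        ring
      rw [this, e19]
      ring
    exact (Nat.ModEq.symm ((Nat.modEq_iff_dvd' (by omega)).mpr
      ⟨Nat.fib (4*t+18) + 2*Nat.fib (4*t+19) + Nat.fib (4*t+20), by omega⟩))
  -- fib(4t+19)*fib(4t+21) ≡ 1 [MOD N]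
  have hfin : Nat.fib (4*t+19) * Nat.fib (4*t+21) ≡ 1 [MOD N] := by
    have heq : Nat.fib (4*t+19) * Nat.fib (4*t+21)
        = 1 + N * (Nat.fib (4*t+18) + Nat.fib (4*t+19)) := by
      rw [e21, hN]
      have : Nat.fib (4*t+19) * (Nat.fib (4*t+19) + Nat.fib (4*t+20))
          = Nat.fib (4*t+19)^2 + Nat.fib (4*t+19) * Nat.fib (4*t+20) := by ring
      rw [this, e19]
      ring
    exact (Nat.ModEq.symm ((Nat.modEq_iff_dvd' (by omega)).mpr
      ⟨Nat.fib (4*t+18) + Nat.fib (4*t+19), by omega⟩))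
  -- main chain
  have hchain := fib_mod_pow (4*t+20) (2*j+1) (4*t+19)
  rw [← hidx, show 4*t+20+1 = 4*t+21 from rfl] at hchain
  have hfinal : Nat.fib (N+2) ≡ 1 [MOD N] := by
    calc Nat.fib (N+2) ≡ Nat.fib (4*t+19) * Nat.fib (4*t+21)^(2*j+1) [MOD N] := hchain
      _ = Nat.fib (4*t+19) * ((Nat.fib (4*t+21)^2)^j * Nat.fib (4*t+21)) := by ring
      _ ≡ Nat.fib (4*t+19) * (1^j * Nat.fib (4*t+21)) [MOD N] :=
          Nat.ModEq.mul_left _ (Nat.ModEq.mul_right _ (hsq.pow j))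
      _ = Nat.fib (4*t+19) * Nat.fib (4*t+21) := by ring
      _ ≡ 1 [MOD N] := hfin
  have hpos : 1 ≤ Nat.fib (N+2) := Nat.fib_pos.mpr (by omega)
  exact (Nat.modEq_iff_dvd' hpos).mp hfinal.symm
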